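/- arXiv:1810.12542 — 3 statements merged into one kernel-verified Lean document; each statement's English description precedes it below -/
import Mathlib

section
/- Let (P, ≤) be a partial order and let Q = P^ω be the finite-support product: elements are functions p : ℕ → P with p(k) equal to the greatest element 1 of P for all but finitely many k, ordered coordinatewise. Then for any p, q ∈ Q there is an order automorphism h of Q (induced by a permutation of ℕ) such that p and h(q) are compatible. -/
/-- The finite-support power `P^ω`: functions `ℕ → P` equal to the greatest
element `⊤` outside a finite set, ordered coordinatewise. -/
abbrev FinSupp (P : Type*) [PartialOrder P] [OrderTop P] :=
  {x : ℕ → P // {k | x k ≠ ⊤}.Finite}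

/-- The order automorphism of `FinSupp P` induced by a permutation of `ℕ`. -/
def permIso {P : Type*} [PartialOrder P] [OrderTop P] (π : Equiv.Perm ℕ) :
    FinSupp P ≃o FinSupp P where
  toFun x := ⟨fun k => x.1 (π.symm k), by
    have : {k | x.1 (π.symm k) ≠ ⊤} = π.symm ⁻¹' {k | x.1 k ≠ ⊤} := rfl
    rw [this]
    exact x.2.preimage (π.symm.injective.injOn)⟩
  invFun x := ⟨fun k => x.1 (π k), by
    have : {k | x.1 (π k) ≠ ⊤} = π ⁻¹' {k | x.1 k ≠ ⊤} := rfl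
    rw [this]
    exact x.2.preimage (π.injective.injOn)⟩
  left_inv x := by ext k; simp
  right_inv x := by ext k; simp
  map_rel_iff' {x y} := by
    constructor
    · intro h k
      have := h (π k)
      simpa using this
    · intro h k
      exact h (π.symm k)

/-- Homogeneity of the finite-support product `P^ω`: for any `p, q` there is an
order automorphism `h` of `P^ω`, induced by a permutation of `ℕ`, such that `p`
and `h q` are compatible. -/
theorem stmt_13 {P : Type*} [PartialOrder P] [OrderTop P] (p q : FinSupp P) :
    ∃ π : Equiv.Perm ℕ, ∃ h : FinSupp P ≃o FinSupp P,
      (∀ x : FinSupp P, ∀ k : ℕ, (h x).1 k = x.1 (π.symm k)) ∧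
      ∃ r : FinSupp P, r ≤ p ∧ r ≤ h q := by
  classical
  obtain ⟨N, hN⟩ : ∃ N : ℕ, ∀ k, p.1 k ≠ ⊤ ∨ q.1 k ≠ ⊤ → k < N := by
    have hfin : ({k | p.1 k ≠ ⊤} ∪ {k | q.1 k ≠ ⊤}).Finite := p.2.union q.2
    obtain ⟨N, hN⟩ := hfin.bddAbove
    exact ⟨N + 1, fun k hk => Nat.lt_succ_of_le (hN hk)⟩
  -- the involution swapping `k ↔ k + N` for `k < N`
  set f : ℕ → ℕ := fun k => if k < N then k + N else if k < 2 * N then k - N else k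
    with hf
  have hinv : ∀ k, f (f k) = k := by
    intro k
    simp only [hf]
    split_ifs <;> omega
  let π : Equiv.Perm ℕ := ⟨f, f, fun k => hinv k, fun k => hinv k⟩
  have hπsymm : ∀ k, π.symm k = f k := fun k => rfl
  refine ⟨π, permIso π, fun x k => rfl, ?_⟩
  -- support of `π • q` lies in `[N, 2N)`, disjoint from support of `p ⊆ [0, N)`
  have hq' : ∀ k, k < N → ((permIso π) q).1 k = ⊤ := by
    intro k hk
    show q.1 (π.symm k) = ⊤
    rw [hπsymm]
    have : f k = k + N := by simp [hf, hk]
    rw [this]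
    by_contra hne
    have := hN (k + N) (Or.inr hne)
    omega
  have hp' : ∀ k, ¬ k < N → p.1 k = ⊤ := by
    intro k hk
    by_contra hne
    exact hk (hN k (Or.inl hne))
  refine ⟨⟨fun k => if p.1 k ≠ ⊤ then p.1 k else ((permIso π) q).1 k, ?_⟩, ?_, ?_⟩
  · apply Set.Finite.subset (p.2.union ((permIso π) q).2)
    intro k hk
    simp only [Set.mem_setOf_eq] at hk
    by_cases h : p.1 k ≠ ⊤
    · exact Or.inl h
    · right
      simpa [h] using hk
  · intro k
    show (if p.1 k ≠ ⊤ then p.1 k else ((permIso π) q).1 k) ≤ p.1 k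
    by_cases h : p.1 k ≠ ⊤
    · simp [h]
    · push_neg at h
      simp [h]
  · intro k
    show (if p.1 k ≠ ⊤ then p.1 k else ((permIso π) q).1 k) ≤ ((permIso π) q).1 k
    by_cases h : p.1 k ≠ ⊤
    · have hk : k < N := hN k (Or.inl h)
      simp [h, hq' k hk]
    · simp [h]
end

section
/- Finite-support products of countable posets are ccc: if (P_i)_{i ∈ I} is a family of countable partial orders each with a greatest element 1_i, then the finite-support product P (elements p with p(i) = 1_i for all but finitely many i, ordered coordinatewise) satisfies the countable chain condition. -/
open Set

/-- Δ-system lemma for uncountable families of finsets of bounded size. -/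
theorem delta_aux {α : Type*} [DecidableEq α] : ∀ n : ℕ, ∀ 𝒜 : Set (Finset α),
    (∀ s ∈ 𝒜, s.card ≤ n) → ¬ 𝒜.Countable →
    ∃ R : Finset α, ∃ ℬ ⊆ 𝒜, ¬ ℬ.Countable ∧
      ∀ s ∈ ℬ, ∀ t ∈ ℬ, s ≠ t → s ∩ t = R := by
  intro n
  induction n with
  | zero =>
    intro 𝒜 hcard hA
    refine absurd (((countable_singleton (∅ : Finset α))).mono ?_) hA
    intro s hs
    simp [Finset.card_eq_zero.mp (Nat.le_zero.mp (hcard s hs))]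
  | succ n ih =>
    intro 𝒜 hcard hA
    by_cases hx : ∃ x, ¬ {s ∈ 𝒜 | x ∈ s}.Countable
    · obtain ⟨x, hx⟩ := hx
      have hinj : Set.InjOn (fun s => Finset.erase s x) {s ∈ 𝒜 | x ∈ s} := by
        intro s hs t ht h
        have h2 := congrArg (insert x) h
        simpa [Finset.insert_erase hs.2, Finset.insert_erase ht.2] using h2
      have hA' : ¬ ((fun s => Finset.erase s x) '' {s ∈ 𝒜 | x ∈ s}).Countable := by
        intro h
        exact hx ((Set.mapsTo_image _ _).countable_of_injOn hinj h)
      have hcard' : ∀ t ∈ (fun s => Finset.erase s x) '' {s ∈ 𝒜 | x ∈ s}, t.card ≤ n := by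
        rintro t ⟨s, hs, rfl⟩
        simp only []
        have := Finset.card_erase_of_mem hs.2
        have := hcard s hs.1
        omega
      obtain ⟨R', ℬ', hsub', hunc', hroot'⟩ := ih _ hcard' hA'
      refine ⟨insert x R', insert x '' ℬ', ?_, ?_, ?_⟩
      · rintro t ⟨u, hu, rfl⟩
        obtain ⟨s, hs, rfl⟩ := hsub' hu
        rw [Finset.insert_erase hs.2]
        exact hs.1
      · intro h
        have hinj2 : Set.InjOn (insert x) ℬ' := by
          intro s hs t ht h2
          obtain ⟨s', hs', rfl⟩ := hsub' hs
          obtain ⟨t', ht', rfl⟩ := hsub' ht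
          have h3 := congrArg (fun u => Finset.erase u x) h2
          simpa [Finset.erase_insert_of_ne, Finset.erase_insert,
            Finset.erase_idem] using h3
        exact hunc' ((Set.mapsTo_image _ _).countable_of_injOn hinj2 h)
      · rintro s ⟨u, hu, rfl⟩ t ⟨v, hv, rfl⟩ hne
        have hxu : x ∉ u := by
          obtain ⟨s', hs', rfl⟩ := hsub' hu; exact Finset.notMem_erase _ _
        have hxv : x ∉ v := by
          obtain ⟨s', hs', rfl⟩ := hsub' hv; exact Finset.notMem_erase _ _
        have huv : u ≠ v := by
          rintro rfl; exact hne rfl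
        have : u ∩ v = R' := hroot' u hu v hv huv
        ext y
        simp only [Finset.mem_inter, Finset.mem_insert]
        constructor
        · rintro ⟨hy1 | hy1, hy2 | hy2⟩
          · exact Or.inl hy1
          · exact Or.inl hy1
          · exact Or.inl hy2
          · right; rw [← this]; exact Finset.mem_inter.mpr ⟨hy1, hy2⟩
        · rintro (rfl | hy)
          · exact ⟨Or.inl rfl, Or.inl rfl⟩
          · rw [← this] at hy
            obtain ⟨h1, h2⟩ := Finset.mem_inter.mp hy
            exact ⟨Or.inr h1, Or.inr h2⟩
    · push_neg at hx
      have hub : ∀ c ⊆ {ℬ : Set (Finset α) | ℬ ⊆ 𝒜 ∧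
          ℬ.Pairwise (fun s t => Disjoint s t)}, IsChain (· ⊆ ·) c →
          ∃ ub ∈ {ℬ : Set (Finset α) | ℬ ⊆ 𝒜 ∧ ℬ.Pairwise (fun s t => Disjoint s t)},
            ∀ s ∈ c, s ⊆ ub := by
        intro c hc hchain
        refine ⟨⋃₀ c, ⟨?_, ?_⟩, fun s hs => subset_sUnion_of_mem hs⟩
        · exact sUnion_subset fun b hb => (hc hb).1
        · intro s hs t ht hne
          obtain ⟨bs, hbs, hsbs⟩ := hs
          obtain ⟨bt, hbt, htbt⟩ := ht
          rcases hchain.total hbs hbt with h | h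
          · exact (hc hbt).2 (h hsbs) htbt hne
          · exact (hc hbs).2 hsbs (h htbt) hne
      obtain ⟨M, hM⟩ := zorn_subset _ hub
      by_cases hMc : M.Countable
      · exfalso
        have hU : (⋃ s ∈ M, (↑s : Set α)).Countable :=
          hMc.biUnion fun s _ => s.countable_toSet
        have hcover : 𝒜 ⊆ {(∅ : Finset α)} ∪ ⋃ x ∈ (⋃ s ∈ M, (↑s : Set α)), {s ∈ 𝒜 | x ∈ s} := by
          intro s hs
          by_cases hse : s = ∅
          · exact Or.inl hse
          by_cases hdisj : ∀ t ∈ M, Disjoint s t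
          · exfalso
            have hins : insert s M ∈ {ℬ : Set (Finset α) | ℬ ⊆ 𝒜 ∧
                ℬ.Pairwise (fun s t => Disjoint s t)} := by
              constructor
              · exact insert_subset hs hM.prop.1
              · exact hM.prop.2.insert fun t ht _ =>
                  ⟨hdisj t ht, (hdisj t ht).symm⟩
            have := hM.eq_of_subset hins (subset_insert _ _)
            have hsM : s ∈ M := this ▸ mem_insert _ _
            have := hdisj s hsM
            exact hse (disjoint_self.mp this)
          · push_neg at hdisj
            obtain ⟨t, htM, hnd⟩ := hdisj
            rw [Finset.not_disjoint_iff] at hnd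
            obtain ⟨x, hxs, hxt⟩ := hnd
            refine Or.inr (mem_biUnion ?_ ⟨hs, hxs⟩)
            exact mem_biUnion htM hxt
        exact hA (((countable_singleton _).union (hU.biUnion fun x _ => hx x)).mono hcover)
      · exact ⟨∅, M, hM.prop.1, hMc, fun s hs t ht hne =>
          Finset.disjoint_iff_inter_eq_empty.mp (hM.prop.2 hs ht hne)⟩


/-- Finite-support products of countable posets (each with a greatest element)
satisfy the countable chain condition: every antichain is countable. -/
theorem stmt_15 {I : Type*} {P : I → Type*} [∀ i, PartialOrder (P i)]
    [∀ i, OrderTop (P i)] [∀ i, Countable (P i)]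
    (A : Set {p : ∀ i, P i // {i | p i ≠ ⊤}.Finite})
    (anti : ∀ p ∈ A, ∀ q ∈ A, p ≠ q →
      ¬∃ r : {p : ∀ i, P i // {i | p i ≠ ⊤}.Finite}, r ≤ p ∧ r ≤ q) :
    A.Countable := by
  classical
  by_contra hA
  -- the support map
  set supp : {p : ∀ i, P i // {i | p i ≠ ⊤}.Finite} → Finset I :=
    fun p => p.2.toFinset with hsupp
  have hmem : ∀ p : {p : ∀ i, P i // {i | p i ≠ ⊤}.Finite}, ∀ i,
      i ∈ supp p ↔ p.1 i ≠ ⊤ := fun p i => p.2.mem_toFinset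
  -- fibers of supp are countable
  have hfiber : ∀ s : Finset I, {p ∈ A | supp p = s}.Countable := by
    intro s
    have : ∀ p ∈ {p ∈ A | supp p = s}, ∀ q ∈ {p ∈ A | supp p = s},
        (fun (i : s) => p.1 i.1) = (fun (i : s) => q.1 i.1) → p = q := by
      rintro p ⟨-, hp⟩ q ⟨-, hq⟩ h
      apply Subtype.ext
      funext i
      by_cases hi : i ∈ s
      · exact congrFun h ⟨i, hi⟩
      · have h1 : p.1 i = ⊤ := by
          by_contra hc; exact hi (hp ▸ (hmem p i).mpr hc)
        have h2 : q.1 i = ⊤ := by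
          by_contra hc; exact hi (hq ▸ (hmem q i).mpr hc)
        rw [h1, h2]
    exact (Set.mapsTo_univ _ _).countable_of_injOn this Set.countable_univ
  -- the image of supp on A is uncountable
  have himg : ¬ (supp '' A).Countable := by
    intro h
    have : A ⊆ ⋃ s ∈ supp '' A, {p ∈ A | supp p = s} := by
      intro p hp
      exact Set.mem_biUnion (Set.mem_image_of_mem _ hp) ⟨hp, rfl⟩
    exact hA ((h.biUnion fun s _ => hfiber s).mono this)
  -- some cardinality class is uncountable
  have hcls : ∃ n : ℕ, ¬ {s ∈ supp '' A | s.card = n}.Countable := by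
    by_contra h
    push_neg at h
    have : supp '' A ⊆ ⋃ n : ℕ, {s ∈ supp '' A | s.card = n} := by
      intro s hs; exact Set.mem_iUnion.mpr ⟨s.card, hs, rfl⟩
    exact himg ((Set.countable_iUnion h).mono this)
  obtain ⟨n, hn⟩ := hcls
  obtain ⟨R, ℬ, hsub, hunc, hroot⟩ := delta_aux n {s ∈ supp '' A | s.card = n}
    (fun s hs => le_of_eq hs.2) hn
  -- pick representatives
  have hrep : ∀ s : ℬ, ∃ p : A, supp p.1 = s.1 := by
    rintro ⟨s, hs⟩
    obtain ⟨p, hp, hps⟩ := (hsub hs).1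
    exact ⟨⟨p, hp⟩, hps⟩
  choose g hg using hrep
  -- restriction to the root is not injective
  have hninj : ¬ Function.Injective (fun (s : ℬ) (i : R) => ((g s).1).1 i.1) := by
    intro hinj
    refine hunc ?_
    rw [← Set.countable_coe_iff]
    have : Function.Injective (fun (s : ℬ) (i : R) => ((g s).1).1 i.1) := hinj
    exact this.countable
  rw [Function.not_injective_iff] at hninj
  obtain ⟨a, b, hab, hne⟩ := hninj
  set p := g a with hp
  set q := g b with hq
  have hpq : p.1 ≠ q.1 := by
    intro h
    apply hne
    apply Subtype.ext
    rw [← hg a, ← hg b, h]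
  have hagree : ∀ i ∈ R, p.1.1 i = q.1.1 i := fun i hi =>
    congrFun hab ⟨i, hi⟩
  have hR : a.1 ∩ b.1 = R :=
    hroot a.1 a.2 b.1 b.2 (fun h => hne (Subtype.ext h))
  -- build the common extension
  set f : ∀ i, P i := fun i => if p.1.1 i = ⊤ then q.1.1 i else p.1.1 i with hf
  have hfin : {i | f i ≠ ⊤}.Finite := by
    refine (p.1.2.union q.1.2).subset ?_
    intro i hi
    simp only [hf, Set.mem_setOf_eq] at hi
    by_cases h : p.1.1 i = ⊤
    · right; simpa [h] using hi
    · left; exact h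
  refine anti p.1 p.2 q.1 q.2 hpq ⟨⟨f, hfin⟩, ?_, ?_⟩
  · intro i
    by_cases h : p.1.1 i = ⊤
    · show f i ≤ p.1.1 i
      rw [h]; exact le_top
    · show f i ≤ p.1.1 i
      simp [hf, h]
  · intro i
    show f i ≤ q.1.1 i
    by_cases h : p.1.1 i = ⊤
    · simp [hf, h]
    · by_cases h2 : q.1.1 i = ⊤
      · rw [h2]; exact le_top
      · have hiR : i ∈ R := by
          rw [← hR]
          refine Finset.mem_inter.mpr ⟨?_, ?_⟩
          · rw [← hg a]; exact (hmem p.1 i).mpr h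
          · rw [← hg b]; exact (hmem q.1 i).mpr h2
        simp [hf, h, hagree i hiR]
end

section
/- Let W : ω₁ + 1 → Set(Q) be an increasing (α ≤ β → W_α ⊆ W_β) family of subsets of a ccc partial order Q such that: (i) W_λ = ⋃_{α<λ} W_α for limit λ; (ii) each W_α is downward closed (q ≤ p ∈ W_α → q ∈ W_α); and (iii) p ∈ W_{α+1} whenever there is a dense set D ⊆ Q such that every q ∈ D with q ≤ p belongs to W_α. Then the construction stabilizes at ω₁: W_{ω₁+1} = W_{ω₁}, where W_{ω₁+1} is defined from W_{ω₁} by rule (iii). -/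
open Cardinal in
/-- Stabilization at `ω₁` of the Solovay construction over a ccc poset `Q`:
if `W` is increasing up to `ω₁`, continuous at limits, downward closed, and
satisfies the successor rule (iii), then applying rule (iii) once more to
`W_{ω₁}` yields nothing new: `W_{ω₁+1} = W_{ω₁}`. -/
theorem stmt_17 {Q : Type*} [PartialOrder Q]
    (ccc : ∀ A : Set Q, (∀ p ∈ A, ∀ q ∈ A, p ≠ q → ¬∃ r, r ≤ p ∧ r ≤ q) → A.Countable)
    (W : Ordinal → Set Q)
    (hmono : ∀ α β : Ordinal, α ≤ β → β ≤ (aleph 1).ord → W α ⊆ W β)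
    (hlim : ∀ l : Ordinal, l ≤ (aleph 1).ord → Order.IsSuccLimit l → W l = ⋃ α ∈ Set.Iio l, W α)
    (hdown : ∀ α : Ordinal, α ≤ (aleph 1).ord → ∀ p ∈ W α, ∀ q : Q, q ≤ p → q ∈ W α)
    (hsucc : ∀ α : Ordinal, α + 1 ≤ (aleph 1).ord → ∀ p : Q,
      (∃ D : Set Q, (∀ r : Q, ∃ q ∈ D, q ≤ r) ∧ ∀ q ∈ D, q ≤ p → q ∈ W α) →
      p ∈ W (α + 1)) :
    ∀ p : Q,
      (∃ D : Set Q, (∀ r : Q, ∃ q ∈ D, q ≤ r) ∧ ∀ q ∈ D, q ≤ p → q ∈ W ((aleph 1).ord)) →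
      p ∈ W ((aleph 1).ord) := by
  classical
  intro p ⟨D, hDdense, hDW⟩
  have hω₁lim : Order.IsSuccLimit ((aleph 1).ord) := Cardinal.isSuccLimit_ord (aleph0_le_aleph 1)
  -- D' : shrink D to conditions that either extend p or are incompatible with p
  set D' : Set Q := {q ∈ D | q ≤ p ∨ ¬∃ r, r ≤ q ∧ r ≤ p} with hD'
  have hD'dense : ∀ r : Q, ∃ q ∈ D', q ≤ r := by
    intro r
    by_cases hc : ∃ s, s ≤ r ∧ s ≤ p
    · obtain ⟨s, hsr, hsp⟩ := hc
      obtain ⟨q, hqD, hqs⟩ := hDdense s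
      exact ⟨q, ⟨hqD, Or.inl (hqs.trans hsp)⟩, hqs.trans hsr⟩
    · obtain ⟨q, hqD, hqr⟩ := hDdense r
      refine ⟨q, ⟨hqD, Or.inr ?_⟩, hqr⟩
      rintro ⟨s, hsq, hsp⟩
      exact hc ⟨s, hsq.trans hqr, hsp⟩
  -- maximal antichain inside D'
  have hzorn := zorn_subset
      {A : Set Q | A ⊆ D' ∧ ∀ a ∈ A, ∀ b ∈ A, a ≠ b → ¬∃ r, r ≤ a ∧ r ≤ b}
      (by
        intro c hc hchain
        refine ⟨⋃₀ c, ⟨?_, ?_⟩, fun s hs => Set.subset_sUnion_of_mem hs⟩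
        · exact Set.sUnion_subset fun s hs => (hc hs).1
        · rintro a ⟨s, hs, has⟩ b ⟨t, ht, hbt⟩ hab
          rcases hchain.total hs ht with h | h
          · exact (hc ht).2 a (h has) b hbt hab
          · exact (hc hs).2 a has b (h hbt) hab)
  obtain ⟨A, ⟨hAD', hAanti⟩, hAmax⟩ := hzorn
  have hAcount : A.Countable := ccc A hAanti
  -- every a ∈ A with a ≤ p lies in some W_α, α < ω₁
  have hmem : ∀ a ∈ A, a ≤ p → ∃ α < (aleph 1).ord, a ∈ W α := by
    intro a ha hap
    have : a ∈ W ((aleph 1).ord) := hDW a (hAD' ha).1 hap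
    rw [hlim _ le_rfl hω₁lim] at this
    simpa using this
  -- choose a uniform bound α < ω₁
  have hbound : ∃ α < (aleph 1).ord, ∀ a ∈ A, a ≤ p → a ∈ W α := by
    set S : Set Q := {a ∈ A | a ≤ p} with hS
    have hScount : S.Countable := hAcount.mono (Set.sep_subset _ _)
    rcases S.eq_empty_or_nonempty with hSe | hSne
    · refine ⟨0, hω₁lim.pos, ?_⟩
      intro a ha hap
      exact absurd (by exact ⟨ha, hap⟩ : a ∈ S) (hSe ▸ Set.notMem_empty a)
    · obtain ⟨g, hg⟩ := (Set.countable_iff_exists_surjective hSne).1 hScount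
      set f : ULift.{u_2} ℕ → Ordinal.{u_2} := fun n =>
        (hmem (g n.down) (g n.down).2.1 (g n.down).2.2).choose with hf
      have hflt : ∀ n, f n < (aleph 1).ord := fun n =>
        (hmem (g n.down) (g n.down).2.1 (g n.down).2.2).choose_spec.1
      have hsup : (⨆ n, f n) < (aleph 1).ord := by
        apply Ordinal.iSup_lt_ord _ hflt
        rw [Cardinal.isRegular_aleph_one.cof_eq]
        simpa using Cardinal.aleph0_lt_aleph_one
      refine ⟨⨆ n, f n, hsup, ?_⟩
      intro a ha hap
      obtain ⟨n, hn⟩ := hg ⟨a, ha, hap⟩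
      have hle : f (ULift.up.{u_2} n) ≤ ⨆ n, f n := by
        apply le_ciSup (f := f)
        refine ⟨(aleph 1).ord, ?_⟩
        rintro x ⟨i, rfl⟩
        exact (hflt i).le
      have hWa : a ∈ W (f (ULift.up.{u_2} n)) := by
        rw [show a = ((g (ULift.up.{u_2} n).down : ↥S) : Q) from (congrArg Subtype.val hn).symm]
        exact (hmem (g (ULift.up.{u_2} n).down) (g (ULift.up.{u_2} n).down).2.1 (g (ULift.up.{u_2} n).down).2.2).choose_spec.2
      exact hmono _ _ hle hsup.le hWa
  obtain ⟨α, hα, hαW⟩ := hbound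
  -- the dense set of extensions of members of A
  have hα1 : α + 1 ≤ (aleph 1).ord := by
    rw [Ordinal.add_one_eq_succ]
    exact (hω₁lim.succ_lt hα).le
  have := hsucc α hα1 p ⟨{q | ∃ a ∈ A, q ≤ a}, ?_, ?_⟩
  · exact hmono _ _ hα1 le_rfl this
  · -- density via maximality of A
    intro r
    obtain ⟨q, hqD', hqr⟩ := hD'dense r
    by_cases hq : ∃ a ∈ A, ∃ s, s ≤ q ∧ s ≤ a
    · obtain ⟨a, ha, s, hsq, hsa⟩ := hq
      exact ⟨s, ⟨a, ha, hsa⟩, hsq.trans hqr⟩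
    · have hqA : q ∈ A := by
        by_contra hqA
        have hins : insert q A ⊆ A := by
          apply hAmax _ (Set.subset_insert _ _)
          refine ⟨Set.insert_subset hqD' hAD', ?_⟩
          rintro a (rfl | ha) b (rfl | hb) hab
          · exact absurd rfl hab
          · rintro ⟨s, hsa, hsb⟩
            exact hq ⟨b, hb, s, hsa, hsb⟩
          · rintro ⟨s, hsa, hsb⟩
            exact hq ⟨a, ha, s, hsb, hsa⟩
          · exact hAanti a ha b hb hab
        exact hqA (hins (Set.mem_insert q A))
      exact ⟨q, ⟨q, hqA, le_rfl⟩, hqr⟩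
  · -- extensions of A below p land in W α
    rintro q ⟨a, ha, hqa⟩ hqp
    have hap : a ≤ p := by
      rcases (hAD' ha).2 with h | h
      · exact h
      · exact absurd ⟨q, hqa, hqp⟩ h
    exact hdown α hα.le a (hαW a ha hap) q hqa
end
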